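/- In the ordered choice panel data model with fixed effects, under the time-invariance condition on ε_t given (X,v), for any cutoff k ∈ {1,…,K} and periods s < t: sgn((X_t − X_s)'β) = sgn(E(1{Y_s ≤ k} − 1{Y_t ≤ k} | X)) almost surely. -/

import Mathlib

open MeasureTheory Set

/-- Conditional expectation of `f` given the σ-algebra generated by the random element `X`. -/
noncomputable def condExpGiven {Ω 𝓧 : Type*} [MeasurableSpace Ω] [MeasurableSpace 𝓧]
    (μ : Measure Ω) (X : Ω → 𝓧) (f : Ω → ℝ) : Ω → ℝ :=
  μ[f | MeasurableSpace.comap X inferInstance]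

open Filter


lemma integrable_ite_le {Ω : Type*} [MeasurableSpace Ω] {μ : Measure Ω} [IsFiniteMeasure μ]
    {e c : Ω → ℝ} (he : Measurable e) (hc : Measurable c) :
    Integrable (fun ω => if e ω ≤ c ω then (1:ℝ) else 0) μ := by
  have hs : MeasurableSet {ω | e ω ≤ c ω} := measurableSet_le he hc
  have : (fun ω => if e ω ≤ c ω then (1:ℝ) else 0)
      = Set.indicator {ω | e ω ≤ c ω} (fun _ => 1) := by
    funext ω; simp [Set.indicator_apply]
  rw [this]
  exact (integrable_const 1).indicator hs

theorem aux_sign {Ω : Type*} {m mX m0 : MeasurableSpace Ω} (μ : Measure Ω)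
    [IsProbabilityMeasure μ]
    (hmXm : mX ≤ m) (hm : m ≤ m0)
    (a b Δ : Ω → ℝ) (hΔab : ∀ ω, Δ ω = a ω - b ω)
    (ham : Measurable[m] a) (hbm : Measurable[m] b) (hΔmX : Measurable[mX] Δ)
    (ha0 : Measurable[m0] a) (hb0 : Measurable[m0] b)
    (es et : Ω → ℝ) (hes : Measurable[m0] es) (het : Measurable[m0] et)
    (G : Ω → ℝ → ℝ) (hG : ∀ ω, StrictMono (G ω))
    (hcdfs : ∀ r : ℝ, μ[(fun ω => if es ω ≤ r then (1:ℝ) else 0)|m] =ᵐ[μ] fun ω => G ω r)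
    (hcdft : ∀ r : ℝ, μ[(fun ω => if et ω ≤ r then (1:ℝ) else 0)|m] =ᵐ[μ] fun ω => G ω r) :
    ∀ᵐ ω ∂μ, Real.sign (Δ ω) =
      Real.sign ((μ[(fun ω' => (if es ω' ≤ a ω' then (1:ℝ) else 0) -
        (if et ω' ≤ b ω' then (1:ℝ) else 0))|mX]) ω) := by
  have hmX : mX ≤ m0 := hmXm.trans hm
  set f : Ω → ℝ := fun ω' => (if es ω' ≤ a ω' then (1:ℝ) else 0) -
        (if et ω' ≤ b ω' then (1:ℝ) else 0) with hfdef
  have hf_int : Integrable f μ :=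
    (integrable_ite_le hes ha0).sub (integrable_ite_le het hb0)
  -- localized cdf identity
  have cdfloc : ∀ (e : Ω → ℝ), Measurable[m0] e →
      (∀ r : ℝ, μ[(fun ω => if e ω ≤ r then (1:ℝ) else 0)|m] =ᵐ[μ] fun ω => G ω r) →
      ∀ (r : ℝ) (A : Set Ω), MeasurableSet[m] A →
      μ[A.indicator (fun ω => if e ω ≤ r then (1:ℝ) else 0)|m]
        =ᵐ[μ] A.indicator (fun ω => G ω r) := by
    intro e he hcdf r A hA
    have h1 := condExp_indicator (μ := μ) (m := m)
      (f := fun ω => if e ω ≤ r then (1:ℝ) else 0)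
      (integrable_ite_le he measurable_const) hA
    refine h1.trans ?_
    filter_upwards [hcdf r] with ω hω
    by_cases hmem : ω ∈ A <;> simp [Set.indicator_apply, hmem, hω]
  -- key lower bound on the set where b < p < q' < a
  have key_ge : ∀ p q' : ℚ,
      ∀ᵐ ω ∂μ, (b ω < (p:ℝ) ∧ (q':ℝ) < a ω) →
        G ω (q':ℝ) - G ω (p:ℝ) ≤ (μ[f|m]) ω := by
    intro p q'
    set S : Set Ω := {ω | b ω < (p:ℝ) ∧ (q':ℝ) < a ω} with hSdef
    have hSm : MeasurableSet[m] S := by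
      have h1 : MeasurableSet[m] {ω | b ω < (p:ℝ)} := hbm measurableSet_Iio
      have h2 : MeasurableSet[m] {ω | (q':ℝ) < a ω} := ham measurableSet_Ioi
      exact h1.inter h2
    set g : Ω → ℝ := fun ω => (if es ω ≤ (q':ℝ) then (1:ℝ) else 0) -
      (if et ω ≤ (p:ℝ) then (1:ℝ) else 0) with hgdef
    have hg_int : Integrable g μ :=
      (integrable_ite_le hes measurable_const).sub (integrable_ite_le het measurable_const)
    have hmono : S.indicator g ≤ S.indicator f := by
      intro ω
      by_cases hωS : ω ∈ S
      · rw [Set.indicator_of_mem hωS, Set.indicator_of_mem hωS]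
        obtain ⟨h1, h2⟩ : b ω < (p:ℝ) ∧ (q':ℝ) < a ω := hωS
        show (if es ω ≤ (q':ℝ) then (1:ℝ) else 0) - (if et ω ≤ (p:ℝ) then (1:ℝ) else 0) ≤
          (if es ω ≤ a ω then (1:ℝ) else 0) - (if et ω ≤ b ω then (1:ℝ) else 0)
        have e1 : (if es ω ≤ (q':ℝ) then (1:ℝ) else 0) ≤ (if es ω ≤ a ω then (1:ℝ) else 0) := by
          split_ifs <;> norm_num <;> linarith
        have e2 : (if et ω ≤ b ω then (1:ℝ) else 0) ≤ (if et ω ≤ (p:ℝ) then (1:ℝ) else 0) := by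
          split_ifs <;> norm_num <;> linarith
        linarith
      · rw [Set.indicator_of_notMem hωS, Set.indicator_of_notMem hωS]
    have hcmono := condExp_mono (m := m) (hg_int.indicator (hm _ hSm))
      (hf_int.indicator (hm _ hSm)) (Filter.Eventually.of_forall hmono)
    have hleft : μ[S.indicator g|m] =ᵐ[μ]
        fun ω => S.indicator (fun ω' => G ω' (q':ℝ)) ω - S.indicator (fun ω' => G ω' (p:ℝ)) ω := by
      have hsplit : S.indicator g = (S.indicator (fun ω => if es ω ≤ (q':ℝ) then (1:ℝ) else 0)) -
          (S.indicator (fun ω => if et ω ≤ (p:ℝ) then (1:ℝ) else 0)) := by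
        funext ω
        by_cases hωS : ω ∈ S <;>
          simp [Set.indicator_apply, hωS, hgdef]
      rw [hsplit]
      have hsub := condExp_sub (m := m) (μ := μ)
        (f := S.indicator (fun ω => if es ω ≤ (q':ℝ) then (1:ℝ) else 0))
        (g := S.indicator (fun ω => if et ω ≤ (p:ℝ) then (1:ℝ) else 0))
        ((integrable_ite_le hes measurable_const).indicator (hm _ hSm))
        ((integrable_ite_le het measurable_const).indicator (hm _ hSm))
      refine hsub.trans ?_
      filter_upwards [cdfloc es hes hcdfs (q':ℝ) S hSm, cdfloc et het hcdft (p:ℝ) S hSm]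
        with ω h1 h2
      simp only [Pi.sub_apply, h1, h2]
    have hright := condExp_indicator (μ := μ) (m := m) (f := f) hf_int hSm
    filter_upwards [hcmono, hleft, hright] with ω h1 h2 h3 hωS
    have hv1 : S.indicator (fun ω' => G ω' (q':ℝ)) ω = G ω (q':ℝ) := Set.indicator_of_mem (s := S) hωS _
    have hv2 : S.indicator (fun ω' => G ω' (p:ℝ)) ω = G ω (p:ℝ) := Set.indicator_of_mem (s := S) hωS _
    have hv3 : S.indicator (μ[f|m]) ω = (μ[f|m]) ω := Set.indicator_of_mem (s := S) hωS _
    rw [h2, hv1, hv2] at h1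
    rw [h3, hv3] at h1
    exact h1
  -- key upper bound on the set where a < p < q' < b
  have key_le : ∀ p q' : ℚ,
      ∀ᵐ ω ∂μ, (a ω < (p:ℝ) ∧ (q':ℝ) < b ω) →
        (μ[f|m]) ω ≤ G ω (p:ℝ) - G ω (q':ℝ) := by
    intro p q'
    set S : Set Ω := {ω | a ω < (p:ℝ) ∧ (q':ℝ) < b ω} with hSdef
    have hSm : MeasurableSet[m] S := by
      have h1 : MeasurableSet[m] {ω | a ω < (p:ℝ)} := ham measurableSet_Iio
      have h2 : MeasurableSet[m] {ω | (q':ℝ) < b ω} := hbm measurableSet_Ioi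
      exact h1.inter h2
    set g : Ω → ℝ := fun ω => (if es ω ≤ (p:ℝ) then (1:ℝ) else 0) -
      (if et ω ≤ (q':ℝ) then (1:ℝ) else 0) with hgdef
    have hg_int : Integrable g μ :=
      (integrable_ite_le hes measurable_const).sub (integrable_ite_le het measurable_const)
    have hmono : S.indicator f ≤ S.indicator g := by
      intro ω
      by_cases hωS : ω ∈ S
      · rw [Set.indicator_of_mem hωS, Set.indicator_of_mem hωS]
        obtain ⟨h1, h2⟩ : a ω < (p:ℝ) ∧ (q':ℝ) < b ω := hωS
        show (if es ω ≤ a ω then (1:ℝ) else 0) - (if et ω ≤ b ω then (1:ℝ) else 0) ≤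
          (if es ω ≤ (p:ℝ) then (1:ℝ) else 0) - (if et ω ≤ (q':ℝ) then (1:ℝ) else 0)
        have e1 : (if es ω ≤ a ω then (1:ℝ) else 0) ≤ (if es ω ≤ (p:ℝ) then (1:ℝ) else 0) := by
          split_ifs <;> norm_num <;> linarith
        have e2 : (if et ω ≤ (q':ℝ) then (1:ℝ) else 0) ≤ (if et ω ≤ b ω then (1:ℝ) else 0) := by
          split_ifs <;> norm_num <;> linarith
        linarith
      · rw [Set.indicator_of_notMem hωS, Set.indicator_of_notMem hωS]
    have hcmono := condExp_mono (m := m) (hf_int.indicator (hm _ hSm))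
      (hg_int.indicator (hm _ hSm)) (Filter.Eventually.of_forall hmono)
    have hleft : μ[S.indicator g|m] =ᵐ[μ]
        fun ω => S.indicator (fun ω' => G ω' (p:ℝ)) ω - S.indicator (fun ω' => G ω' (q':ℝ)) ω := by
      have hsplit : S.indicator g = (S.indicator (fun ω => if es ω ≤ (p:ℝ) then (1:ℝ) else 0)) -
          (S.indicator (fun ω => if et ω ≤ (q':ℝ) then (1:ℝ) else 0)) := by
        funext ω
        by_cases hωS : ω ∈ S <;>
          simp [Set.indicator_apply, hωS, hgdef]
      rw [hsplit]
      have hsub := condExp_sub (m := m) (μ := μ)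
        (f := S.indicator (fun ω => if es ω ≤ (p:ℝ) then (1:ℝ) else 0))
        (g := S.indicator (fun ω => if et ω ≤ (q':ℝ) then (1:ℝ) else 0))
        ((integrable_ite_le hes measurable_const).indicator (hm _ hSm))
        ((integrable_ite_le het measurable_const).indicator (hm _ hSm))
      refine hsub.trans ?_
      filter_upwards [cdfloc es hes hcdfs (p:ℝ) S hSm, cdfloc et het hcdft (q':ℝ) S hSm]
        with ω h1 h2
      simp only [Pi.sub_apply, h1, h2]
    have hright := condExp_indicator (μ := μ) (m := m) (f := f) hf_int hSm
    filter_upwards [hcmono, hleft, hright] with ω h1 h2 h3 hωS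
    have hv1 : S.indicator (fun ω' => G ω' (p:ℝ)) ω = G ω (p:ℝ) := Set.indicator_of_mem (s := S) hωS _
    have hv2 : S.indicator (fun ω' => G ω' (q':ℝ)) ω = G ω (q':ℝ) := Set.indicator_of_mem (s := S) hωS _
    have hv3 : S.indicator (μ[f|m]) ω = (μ[f|m]) ω := Set.indicator_of_mem (s := S) hωS _
    rw [h2, hv1, hv2] at h1
    rw [h3, hv3] at h1
    exact h1
  -- positivity / negativity of the conditional expectation given m
  have hApos : ∀ᵐ ω ∂μ, 0 < Δ ω → 0 < (μ[f|m]) ω := by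
    have hall := ae_all_iff.mpr (fun pq : ℚ × ℚ => key_ge pq.1 pq.2)
    filter_upwards [hall] with ω hω hΔpos
    have hab : b ω < a ω := by have := hΔab ω; linarith
    obtain ⟨p, hp1, hp2⟩ := exists_rat_btwn hab
    obtain ⟨q', hq1, hq2⟩ := exists_rat_btwn hp2
    have hle := hω (p, q') ⟨hp1, hq2⟩
    have hlt : G ω (p:ℝ) < G ω (q':ℝ) := hG ω hq1
    linarith
  have hAneg : ∀ᵐ ω ∂μ, Δ ω < 0 → (μ[f|m]) ω < 0 := by
    have hall := ae_all_iff.mpr (fun pq : ℚ × ℚ => key_le pq.1 pq.2)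
    filter_upwards [hall] with ω hω hΔneg
    have hab : a ω < b ω := by have := hΔab ω; linarith
    obtain ⟨p, hp1, hp2⟩ := exists_rat_btwn hab
    obtain ⟨q', hq1, hq2⟩ := exists_rat_btwn hp2
    have hle := hω (p, q') ⟨hp1, hq2⟩
    have hlt : G ω (p:ℝ) < G ω (q':ℝ) := hG ω hq1
    linarith
  -- the zero set
  set A0 : Set Ω := {ω | Δ ω = 0} with hA0def
  have hA0mX : MeasurableSet[mX] A0 := hΔmX (measurableSet_singleton 0)
  have hA0m : MeasurableSet[m] A0 := hmXm _ hA0mX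
  have hA00 : MeasurableSet[m0] A0 := hm _ (hmXm _ hA0mX)
  -- dyadic approximations of a
  set cn : ℕ → Ω → ℝ := fun n ω => ((⌈a ω * 2 ^ n⌉ : ℤ) : ℝ) / 2 ^ n with hcndef
  have hcn0 : ∀ n, Measurable[m0] (cn n) := by
    intro n
    exact ((measurable_from_top.comp (Int.measurable_ceil.comp (ha0.mul measurable_const))).div_const _)
  have hcn_ge : ∀ n ω, a ω ≤ cn n ω := by
    intro n ω
    rw [hcndef]
    dsimp only
    rw [le_div_iff₀ (by positivity : (0:ℝ) < 2 ^ n)]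
    exact Int.le_ceil _
  have hcn_le : ∀ n ω, cn n ω ≤ a ω + 1 / 2 ^ n := by
    intro n ω
    rw [hcndef]
    dsimp only
    rw [div_le_iff₀ (by positivity : (0:ℝ) < 2 ^ n)]
    have h1 : ((⌈a ω * 2 ^ n⌉ : ℤ) : ℝ) ≤ a ω * 2 ^ n + 1 := (Int.ceil_lt_add_one (a ω * 2 ^ n)).le
    have h2 : a ω * 2 ^ n + 1 = (a ω + 1 / 2 ^ n) * 2 ^ n := by field_simp
    linarith
  set hfun : ℕ → Ω → ℝ := fun n => A0.indicator (fun ω =>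
    (if es ω ≤ cn n ω then (1:ℝ) else 0) - (if et ω ≤ cn n ω then (1:ℝ) else 0)) with hfundef
  have hfun_int : ∀ n, Integrable (hfun n) μ := by
    intro n
    exact ((integrable_ite_le hes (hcn0 n)).sub (integrable_ite_le het (hcn0 n))).indicator hA00
  have hn_zero : ∀ n, μ[hfun n|m] =ᵐ[μ] 0 := by
    intro n
    have claim_z : ∀ z : ℤ, ∀ᵐ ω ∂μ,
        ω ∈ A0 ∩ {ω | ⌈a ω * 2 ^ n⌉ = z} → (μ[hfun n|m]) ω = 0 := by
      intro z
      set Tz : Set Ω := A0 ∩ {ω | ⌈a ω * 2 ^ n⌉ = z} with hTzdef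
      have hTzm : MeasurableSet[m] Tz :=
        hA0m.inter ((Int.measurable_ceil.comp (ham.mul measurable_const))
          (measurableSet_singleton z))
      set r : ℝ := ((z : ℤ) : ℝ) / 2 ^ n with hrdef
      have hTz_eq : Tz.indicator (hfun n) =
          (Tz.indicator (fun ω => if es ω ≤ r then (1:ℝ) else 0)) -
          (Tz.indicator (fun ω => if et ω ≤ r then (1:ℝ) else 0)) := by
        funext ω
        by_cases hωT : ω ∈ Tz
        · obtain ⟨hωA, hωz⟩ := hωT
          have hmemT : ω ∈ Tz := ⟨hωA, hωz⟩
          have hωz' : ⌈a ω * 2 ^ n⌉ = z := hωz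
          have hcnr : cn n ω = r := by
            rw [hcndef, hrdef]; dsimp only; rw [hωz']
          rw [Pi.sub_apply, Set.indicator_of_mem hmemT, Set.indicator_of_mem hmemT,
            Set.indicator_of_mem hmemT, hfundef]
          dsimp only
          rw [Set.indicator_of_mem hωA, hcnr]
        · rw [Pi.sub_apply, Set.indicator_of_notMem hωT, Set.indicator_of_notMem hωT,
            Set.indicator_of_notMem hωT]
          norm_num
      have h1 := condExp_indicator (μ := μ) (m := m) (f := hfun n) (hfun_int n) hTzm
      have h2 : μ[Tz.indicator (hfun n)|m] =ᵐ[μ] 0 := by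
        rw [hTz_eq]
        have hsub := condExp_sub (m := m) (μ := μ)
          (f := Tz.indicator (fun ω => if es ω ≤ r then (1:ℝ) else 0))
          (g := Tz.indicator (fun ω => if et ω ≤ r then (1:ℝ) else 0))
          ((integrable_ite_le hes measurable_const).indicator (hm _ hTzm))
          ((integrable_ite_le het measurable_const).indicator (hm _ hTzm))
        refine hsub.trans ?_
        filter_upwards [cdfloc es hes hcdfs r Tz hTzm, cdfloc et het hcdft r Tz hTzm]
          with ω e1 e2
        simp only [Pi.sub_apply, e1, e2, sub_self, Pi.zero_apply]
      filter_upwards [h1, h2] with ω e1 e2 hωT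
      have : Tz.indicator (μ[hfun n|m]) ω = 0 := by rw [← e1, e2]; rfl
      rwa [Set.indicator_of_mem hωT] at this
    have claim_out : ∀ᵐ ω ∂μ, ω ∉ A0 → (μ[hfun n|m]) ω = 0 := by
      have hidem : A0.indicator (hfun n) = hfun n := by
        funext ω
        by_cases hωA : ω ∈ A0
        · rw [Set.indicator_of_mem hωA]
        · rw [Set.indicator_of_notMem hωA, hfundef]
          dsimp only
          rw [Set.indicator_of_notMem hωA]
      have h1 := condExp_indicator (μ := μ) (m := m) (f := hfun n) (hfun_int n) hA0m
      rw [hidem] at h1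
      filter_upwards [h1] with ω e1 hωA
      rw [e1, Set.indicator_of_notMem hωA]
    have hz := ae_all_iff.mpr claim_z
    filter_upwards [hz, claim_out] with ω h1 h2
    by_cases hωA : ω ∈ A0
    · exact h1 ⌈a ω * 2 ^ n⌉ ⟨hωA, rfl⟩
    · exact h2 hωA
  -- pass to the limit
  set h0 : Ω → ℝ := A0.indicator f with hh0def
  have hh0_int : Integrable h0 μ := hf_int.indicator hA00
  have habs : ∀ n, ∫ ω, |(μ[h0|m]) ω| ∂μ ≤ ∫ ω, |h0 ω - hfun n ω| ∂μ := by
    intro n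
    have e1 : μ[h0|m] =ᵐ[μ] μ[h0 - hfun n|m] := by
      have hsub := (condExp_sub (m := m) (μ := μ) (f := h0) (g := hfun n)
        hh0_int (hfun_int n)).symm
      refine Filter.EventuallyEq.trans ?_ hsub
      filter_upwards [hn_zero n] with ω e2
      simp [Pi.sub_apply, e2]
    calc ∫ ω, |(μ[h0|m]) ω| ∂μ = ∫ ω, |(μ[h0 - hfun n|m]) ω| ∂μ := by
          refine integral_congr_ae ?_
          filter_upwards [e1] with ω e2
          rw [e2]
      _ ≤ ∫ ω, |(h0 - hfun n) ω| ∂μ := integral_abs_condExp_le _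
      _ = ∫ ω, |h0 ω - hfun n ω| ∂μ := by simp [Pi.sub_apply]
  have hbound1 : ∀ (x y : ℝ) (P Q : Prop) (hP : Decidable P) (hQ : Decidable Q),
      |(if P then (1:ℝ) else 0) - (if Q then (1:ℝ) else 0)| ≤ 1 := by
    intro x y P Q hP hQ
    split_ifs <;> norm_num
  have hfmeas : Measurable[m0] f := by
    rw [hfdef]
    exact ((measurable_const.ite (measurableSet_le hes ha0) measurable_const).sub
      (measurable_const.ite (measurableSet_le het hb0) measurable_const))
  have hfunmeas : ∀ n, Measurable[m0] (hfun n) := by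
    intro n
    exact (((measurable_const.ite (measurableSet_le hes (hcn0 n)) measurable_const).sub
      (measurable_const.ite (measurableSet_le het (hcn0 n)) measurable_const))).indicator hA00
  have hlim : Filter.Tendsto (fun n => ∫ ω, |h0 ω - hfun n ω| ∂μ) Filter.atTop (nhds 0) := by
    have := MeasureTheory.tendsto_integral_of_dominated_convergence
      (F := fun n ω => |h0 ω - hfun n ω|) (f := fun _ => (0:ℝ)) (μ := μ)
      (bound := fun _ => 2)
      (fun n => (((hfmeas.indicator hA00).sub (hfunmeas n)).abs).aestronglyMeasurable)
      (integrable_const 2)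
      ?_ ?_
    · simpa using this
    · intro n
      refine Filter.Eventually.of_forall fun ω => ?_
      have e1 : |h0 ω| ≤ 1 := by
        rw [hh0def]
        by_cases hωA : ω ∈ A0
        · rw [Set.indicator_of_mem hωA]; exact hbound1 0 0 _ _ _ _
        · rw [Set.indicator_of_notMem hωA]; norm_num
      have e2 : |hfun n ω| ≤ 1 := by
        rw [hfundef]
        dsimp only
        by_cases hωA : ω ∈ A0
        · rw [Set.indicator_of_mem hωA]; exact hbound1 0 0 _ _ _ _
        · rw [Set.indicator_of_notMem hωA]; norm_num
      have := abs_sub (h0 ω) (hfun n ω)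
      rw [Real.norm_eq_abs, abs_abs]
      calc |h0 ω - hfun n ω| ≤ |h0 ω| + |hfun n ω| := abs_sub _ _
        _ ≤ 2 := by linarith
    · refine Filter.Eventually.of_forall fun ω => ?_
      by_cases hωA : ω ∈ A0
      · -- on A0 : b ω = a ω and the indicators converge
        have hba : b ω = a ω := by
          have : Δ ω = 0 := hωA
          have := hΔab ω; linarith
        have hconv : ∀ e : Ω → ℝ, Filter.Tendsto
            (fun n => if e ω ≤ cn n ω then (1:ℝ) else 0) Filter.atTop
            (nhds (if e ω ≤ a ω then (1:ℝ) else 0)) := by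
          intro e
          by_cases hle : e ω ≤ a ω
          · have : ∀ n, (if e ω ≤ cn n ω then (1:ℝ) else 0) = 1 := by
              intro n
              rw [if_pos (hle.trans (hcn_ge n ω))]
            rw [if_pos hle]
            simp only [this]
            exact tendsto_const_nhds
          · rw [if_neg hle]
            push_neg at hle
            obtain ⟨N, hN⟩ := pow_unbounded_of_one_lt (1 / (e ω - a ω)) (by norm_num : (1:ℝ) < 2)
            have hev : ∀ n ≥ N, (if e ω ≤ cn n ω then (1:ℝ) else 0) = 0 := by
              intro n hn
              rw [if_neg]
              push_neg
              have h2n : (1:ℝ) / 2 ^ n ≤ 1 / 2 ^ N := by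
                apply div_le_div_of_nonneg_left (by norm_num) (by positivity)
                exact pow_le_pow_right₀ (by norm_num) hn
              have hsmall : (1:ℝ) / 2 ^ N < e ω - a ω := by
                rw [div_lt_iff₀ (by positivity)]
                rw [div_lt_iff₀ (by linarith) ] at hN
                nlinarith [hN]
              calc cn n ω ≤ a ω + 1 / 2 ^ n := hcn_le n ω
                _ ≤ a ω + 1 / 2 ^ N := by linarith
                _ < e ω := by linarith
            refine Filter.Tendsto.congr' ?_ tendsto_const_nhds
            filter_upwards [Filter.eventually_atTop.mpr ⟨N, hev⟩] with n hn
            rw [hn]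
        have hconv2 : Filter.Tendsto (fun n => hfun n ω) Filter.atTop (nhds (h0 ω)) := by
          have hval : ∀ n, hfun n ω = (if es ω ≤ cn n ω then (1:ℝ) else 0) -
              (if et ω ≤ cn n ω then (1:ℝ) else 0) := fun n => Set.indicator_of_mem hωA _
          have hval0 : h0 ω = (if es ω ≤ a ω then (1:ℝ) else 0) -
              (if et ω ≤ a ω then (1:ℝ) else 0) := by
            rw [hh0def, Set.indicator_of_mem hωA, hfdef]
            simp [hba]
          simp only [hval, hval0]
          exact (hconv es).sub (hconv et)
        have h6 : Filter.Tendsto (fun n => h0 ω - hfun n ω) Filter.atTop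
            (nhds (h0 ω - h0 ω)) :=
          Filter.Tendsto.sub
            (tendsto_const_nhds : Filter.Tendsto (fun _ : ℕ => h0 ω) Filter.atTop (nhds (h0 ω)))
            hconv2
        simpa using h6.abs
      · have : ∀ n, |h0 ω - hfun n ω| = 0 := by
          intro n
          have v1 : h0 ω = 0 := by rw [hh0def, Set.indicator_of_notMem hωA]
          have v2 : hfun n ω = 0 := by
            rw [hfundef]; exact Set.indicator_of_notMem hωA _
          rw [v1, v2]; simp
        simp only [this]
        exact tendsto_const_nhds
  have hAzero : μ[h0|m] =ᵐ[μ] 0 := by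
    have hI0 : ∫ ω, |(μ[h0|m]) ω| ∂μ ≤ 0 := ge_of_tendsto' hlim habs
    have hInn : 0 ≤ ∫ ω, |(μ[h0|m]) ω| ∂μ := integral_nonneg fun ω => abs_nonneg _
    have hIeq : ∫ ω, |(μ[h0|m]) ω| ∂μ = 0 := le_antisymm hI0 hInn
    have := (integral_eq_zero_iff_of_nonneg_ae
      (Filter.Eventually.of_forall fun ω => abs_nonneg ((μ[h0|m]) ω))
      integrable_condExp.abs).mp hIeq
    filter_upwards [this] with ω e1
    have : |(μ[h0|m]) ω| = 0 := e1
    simpa [abs_eq_zero] using this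
  -- transfer to the σ-algebra generated by X
  have hD'sm : StronglyMeasurable[mX] (μ[f|mX]) := stronglyMeasurable_condExp
  have hD'meas : Measurable[mX] (μ[f|mX]) := hD'sm.measurable
  -- zero case
  have hzero' : ∀ᵐ ω ∂μ, Δ ω = 0 → (μ[f|mX]) ω = 0 := by
    have h1 := condExp_indicator (μ := μ) (m := mX) (f := f) hf_int hA0mX
    have h2 : μ[A0.indicator f|mX] =ᵐ[μ] μ[μ[A0.indicator f|m]|mX] :=
      (condExp_condExp_of_le hmXm hm).symm
    have h3 : μ[μ[A0.indicator f|m]|mX] =ᵐ[μ] μ[(0 : Ω → ℝ)|mX] := by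
      refine condExp_congr_ae ?_
      rw [← hh0def]
      exact hAzero
    have h4 : μ[(0 : Ω → ℝ)|mX] = 0 := condExp_zero
    filter_upwards [h1, h2, h3] with ω e1 e2 e3 hΔ0
    have hωA : ω ∈ A0 := hΔ0
    have e4 : A0.indicator (μ[f|mX]) ω = 0 := by
      rw [← e1, e2, e3, h4]
      rfl
    rwa [Set.indicator_of_mem hωA] at e4
  -- positive case
  have hgen : ∀ (S : Set Ω), MeasurableSet[mX] S →
      (∀ᵐ ω ∂μ.restrict S, 0 < (μ[f|m]) ω) → (∫ ω in S, (μ[f|mX]) ω ∂μ ≤ 0) → μ S = 0 := by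
    intro S hSmX hDpos hIle
    by_contra hne
    have hS0 : MeasurableSet[m0] S := hmX _ hSmX
    have hint1 : ∫ ω in S, (μ[f|mX]) ω ∂μ = ∫ ω in S, f ω ∂μ :=
      setIntegral_condExp hmX hf_int hSmX
    have hint2 : ∫ ω in S, (μ[f|m]) ω ∂μ = ∫ ω in S, f ω ∂μ :=
      setIntegral_condExp hm hf_int (hmXm _ hSmX)
    have hpos : 0 < ∫ ω in S, (μ[f|m]) ω ∂μ := by
      rw [integral_pos_iff_support_of_nonneg_ae
        (by filter_upwards [hDpos] with ω h; exact h.le)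
        (integrable_condExp.restrict)]
      have hsupp : ∀ᵐ ω ∂μ.restrict S, ω ∈ Function.support (μ[f|m]) := by
        filter_upwards [hDpos] with ω h
        exact Function.mem_support.mpr h.ne'
      have hcompl : μ.restrict S (Function.support (μ[f|m]))ᶜ = 0 := by
        have h5 := ae_iff.mp hsupp
        simpa [Set.compl_def] using h5
      have huniv : μ.restrict S Set.univ = μ S := by
        rw [Measure.restrict_apply_univ]
      have hle2 : μ.restrict S Set.univ ≤ μ.restrict S (Function.support (μ[f|m])) +
          μ.restrict S (Function.support (μ[f|m]))ᶜ := by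
        rw [← Set.union_compl_self (Function.support (μ[f|m]))]
        exact measure_union_le _ _
      rw [hcompl, add_zero, huniv] at hle2
      have : 0 < μ S := by
        exact lt_of_le_of_ne zero_le (Ne.symm hne)
      exact lt_of_lt_of_le this hle2
    rw [hint2, ← hint1] at hpos
    linarith
  have hpos' : ∀ᵐ ω ∂μ, 0 < Δ ω → 0 < (μ[f|mX]) ω := by
    set S : Set Ω := {ω | 0 < Δ ω} ∩ {ω | (μ[f|mX]) ω ≤ 0} with hSdef
    have hSmX : MeasurableSet[mX] S :=
      (hΔmX measurableSet_Ioi).inter (hD'meas measurableSet_Iic)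
    have hS0 : MeasurableSet[m0] S := hmX _ hSmX
    have hnul : μ S = 0 := by
      refine hgen S hSmX ?_ ?_
      · filter_upwards [ae_restrict_of_ae hApos, ae_restrict_mem hS0] with ω h1 h2
        exact h1 h2.1
      · exact setIntegral_nonpos hS0 fun ω hω => hω.2
    rw [← compl_mem_ae_iff] at hnul
    filter_upwards [hnul] with ω hω hΔpos
    by_contra hc
    exact hω ⟨hΔpos, not_lt.mp hc⟩
  have hneg' : ∀ᵐ ω ∂μ, Δ ω < 0 → (μ[f|mX]) ω < 0 := by
    set S : Set Ω := {ω | Δ ω < 0} ∩ {ω | 0 ≤ (μ[f|mX]) ω} with hSdef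
    have hSmX : MeasurableSet[mX] S :=
      (hΔmX measurableSet_Iio).inter (hD'meas measurableSet_Ici)
    have hS0 : MeasurableSet[m0] S := hmX _ hSmX
    have hnul : μ S = 0 := by
      -- apply hgen to -f via the identity μ[-f|·] =ᵐ -μ[f|·]
      by_contra hne
      have hint1 : ∫ ω in S, (μ[f|mX]) ω ∂μ = ∫ ω in S, f ω ∂μ :=
        setIntegral_condExp hmX hf_int hSmX
      have hint2 : ∫ ω in S, (μ[f|m]) ω ∂μ = ∫ ω in S, f ω ∂μ :=
        setIntegral_condExp hm hf_int (hmXm _ hSmX)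
      have hD'ge : 0 ≤ ∫ ω in S, (μ[f|mX]) ω ∂μ :=
        setIntegral_nonneg hS0 fun ω hω => hω.2
      have hDneg : ∀ᵐ ω ∂μ.restrict S, (μ[f|m]) ω < 0 := by
        filter_upwards [ae_restrict_of_ae hAneg, ae_restrict_mem hS0] with ω h1 h2
        exact h1 h2.1
      have hpos : 0 < ∫ ω in S, (-(μ[f|m])) ω ∂μ := by
        rw [integral_pos_iff_support_of_nonneg_ae
          (by filter_upwards [hDneg] with ω h; simp; exact h.le)
          (integrable_condExp.neg.restrict)]
        have hsupp : ∀ᵐ ω ∂μ.restrict S, ω ∈ Function.support (-(μ[f|m])) := by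
          filter_upwards [hDneg] with ω h
          have : (-(μ[f|m])) ω ≠ 0 := by simp; linarith
          exact Function.mem_support.mpr this
        have hcompl : μ.restrict S (Function.support (-(μ[f|m])))ᶜ = 0 := by
          have h5 := ae_iff.mp hsupp
          simpa [Set.compl_def] using h5
        have huniv : μ.restrict S Set.univ = μ S := by
          rw [Measure.restrict_apply_univ]
        have hle2 : μ.restrict S Set.univ ≤ μ.restrict S (Function.support (-(μ[f|m]))) +
            μ.restrict S (Function.support (-(μ[f|m])))ᶜ := by
          rw [← Set.union_compl_self (Function.support (-(μ[f|m])))]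
          exact measure_union_le _ _
        rw [hcompl, add_zero, huniv] at hle2
        have : 0 < μ S := lt_of_le_of_ne zero_le (Ne.symm hne)
        exact lt_of_lt_of_le this hle2
      have hneg2 : ∫ ω in S, (μ[f|m]) ω ∂μ < 0 := by
        have : ∫ ω in S, (-(μ[f|m])) ω ∂μ = -∫ ω in S, (μ[f|m]) ω ∂μ := by
          simp [integral_neg]
        rw [this] at hpos
        linarith
      rw [hint2, ← hint1] at hneg2
      linarith
    rw [← compl_mem_ae_iff] at hnul
    filter_upwards [hnul] with ω hω hΔneg
    by_contra hc
    exact hω ⟨hΔneg, not_lt.mp hc⟩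
  filter_upwards [hpos', hneg', hzero'] with ω h1 h2 h3
  rcases lt_trichotomy (Δ ω) 0 with h | h | h
  · rw [Real.sign_of_neg h, Real.sign_of_neg (h2 h)]
  · rw [h, Real.sign_zero, h3 h, Real.sign_zero]
  · rw [Real.sign_of_pos h, Real.sign_of_pos (h1 h)]

set_option maxHeartbeats 2000000 in
/-- In the ordered choice panel data model with fixed effects
`Y_t = Σ_j j·1{λ_{j−1} < X_t'β + v + ε_t ≤ λ_j}`, under the time-invariance condition on
`ε_t` given `(X,v)` (common strictly increasing conditional cdf `F`), for any cutoff
`k ∈ {1,…,K}` and periods `s < t`: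
`sgn((X_t − X_s)'β) = sgn(E(1{Y_s ≤ k} − 1{Y_t ≤ k} | X))` almost surely.
(The key model implication `1{Y_t ≤ k} = 1{X_t'β + v + ε_t ≤ λ_k}` is hypothesis `hY`.) -/
theorem panel_ordered_sign_equivalence {q T K : ℕ} {Ω : Type*} [MeasurableSpace Ω]
    (μ : Measure Ω) [IsProbabilityMeasure μ]
    (X : Ω → Fin T → Fin q → ℝ) (hX : Measurable X)
    (v : Ω → ℝ) (hv : Measurable v)
    (ε : Fin T → Ω → ℝ) (hε : ∀ t, Measurable (ε t))
    (β : Fin q → ℝ)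
    -- threshold parameters λ₁ < … < λ_K
    (lam : ℕ → ℝ) (hlam : StrictMonoOn lam (Icc 1 K))
    -- the ordered outcomes, taking values in {1,…,K+1}
    (Y : Fin T → Ω → ℕ)
    (hYrange : ∀ t ω, Y t ω ∈ Icc 1 (K + 1))
    -- 1{Y_t ≤ k} = 1{X_t'β + v + ε_t ≤ λ_k} for each cutoff k ∈ {1,…,K}
    (hY : ∀ (t : Fin T) (k : ℕ), 1 ≤ k → k ≤ K → ∀ ω,
      (Y t ω ≤ k ↔ (∑ i, X ω t i * β i) + v ω + ε t ω ≤ lam k))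
    -- `F x w` is the common (time-invariant) cdf of `ε_t` conditional on `(X,v) = (x,w)`
    (F : (Fin T → Fin q → ℝ) → ℝ → ℝ → ℝ)
    -- everywhere positive conditional density: F is strictly increasing
    (hFstrict : ∀ x w, StrictMono (F x w))
    -- conditional cdf identity, the same F for every period t (time invariance)
    (hcdf : ∀ (t : Fin T) (r : ℝ),
      condExpGiven μ (fun ω => (X ω, v ω)) (fun ω => if ε t ω ≤ r then 1 else 0)
        =ᵐ[μ] fun ω => F (X ω) (v ω) r) :
    ∀ (k : ℕ), 1 ≤ k → k ≤ K → ∀ s t : Fin T, s < t →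
      ∀ᵐ ω ∂μ,
        Real.sign (∑ i, (X ω t i - X ω s i) * β i) =
          Real.sign (condExpGiven μ X
            (fun ω' => (if Y s ω' ≤ k then (1:ℝ) else 0) -
              (if Y t ω' ≤ k then (1:ℝ) else 0)) ω) := by
  intro k hk1 hkK s t hst
  classical
  -- replace the indicators of Y by indicators of ε
  have hgoalfun : (fun ω' => (if Y s ω' ≤ k then (1:ℝ) else 0) -
      (if Y t ω' ≤ k then (1:ℝ) else 0)) =
      (fun ω' => (if ε s ω' ≤ lam k - (∑ i, X ω' s i * β i) - v ω' then (1:ℝ) else 0) -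
        (if ε t ω' ≤ lam k - (∑ i, X ω' t i * β i) - v ω' then (1:ℝ) else 0)) := by
    funext ω
    have h1 : (Y s ω ≤ k) ↔ (ε s ω ≤ lam k - (∑ i, X ω s i * β i) - v ω) := by
      rw [hY s k hk1 hkK ω]; constructor <;> intro h <;> linarith
    have h2 : (Y t ω ≤ k) ↔ (ε t ω ≤ lam k - (∑ i, X ω t i * β i) - v ω) := by
      rw [hY t k hk1 hkK ω]; constructor <;> intro h <;> linarith
    rw [if_congr h1 rfl rfl, if_congr h2 rfl rfl]
  rw [hgoalfun]
  -- the σ-algebras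
  have hm : MeasurableSpace.comap (fun ω => (X ω, v ω)) inferInstance ≤ ‹MeasurableSpace Ω› :=
    measurable_iff_comap_le.mp (hX.prodMk hv)
  have hmXm : MeasurableSpace.comap X inferInstance ≤
      MeasurableSpace.comap (fun ω => (X ω, v ω)) inferInstance := by
    calc MeasurableSpace.comap X inferInstance
        = MeasurableSpace.comap (fun ω => (X ω, v ω))
            (MeasurableSpace.comap Prod.fst inferInstance) := by
          rw [MeasurableSpace.comap_comp]; rfl
      _ ≤ MeasurableSpace.comap (fun ω => (X ω, v ω)) inferInstance :=
          MeasurableSpace.comap_mono (measurable_iff_comap_le.mp measurable_fst)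
  have hXVm : Measurable[MeasurableSpace.comap (fun ω => (X ω, v ω)) inferInstance]
      (fun ω => (X ω, v ω)) := measurable_iff_comap_le.mpr le_rfl
  have hXmX : Measurable[MeasurableSpace.comap X inferInstance] X :=
    measurable_iff_comap_le.mpr le_rfl
  -- the threshold functions
  have houter : ∀ u : Fin T, Measurable
      (fun p : (Fin T → Fin q → ℝ) × ℝ => lam k - (∑ i, p.1 u i * β i) - p.2) := by
    intro u
    refine Measurable.sub (Measurable.sub measurable_const ?_) measurable_snd
    exact Finset.measurable_sum _ fun i _ =>
      ((measurable_pi_apply i).comp ((measurable_pi_apply u).comp measurable_fst)).mul_const _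
  have ham : Measurable[MeasurableSpace.comap (fun ω => (X ω, v ω)) inferInstance]
      (fun ω => lam k - (∑ i, X ω s i * β i) - v ω) := (houter s).comp hXVm
  have hbm : Measurable[MeasurableSpace.comap (fun ω => (X ω, v ω)) inferInstance]
      (fun ω => lam k - (∑ i, X ω t i * β i) - v ω) := (houter t).comp hXVm
  have hΔmX : Measurable[MeasurableSpace.comap X inferInstance]
      (fun ω => ∑ i, (X ω t i - X ω s i) * β i) := by
    have houter2 : Measurable (fun x : Fin T → Fin q → ℝ => ∑ i, (x t i - x s i) * β i) :=
      Finset.measurable_sum _ fun i _ =>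
        by fun_prop
    exact houter2.comp hXmX
  have ha0 : Measurable (fun ω => lam k - (∑ i, X ω s i * β i) - v ω) :=
    (houter s).comp (hX.prodMk hv)
  have hb0 : Measurable (fun ω => lam k - (∑ i, X ω t i * β i) - v ω) :=
    (houter t).comp (hX.prodMk hv)
  have hΔab : ∀ ω, (fun ω => ∑ i, (X ω t i - X ω s i) * β i) ω =
      (fun ω => lam k - (∑ i, X ω s i * β i) - v ω) ω -
      (fun ω => lam k - (∑ i, X ω t i * β i) - v ω) ω := by
    intro ω
    simp only [sub_mul, Finset.sum_sub_distrib]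
    ring
  have main := aux_sign (m := MeasurableSpace.comap (fun ω => (X ω, v ω)) inferInstance)
    (mX := MeasurableSpace.comap X inferInstance) μ hmXm hm
    (fun ω => lam k - (∑ i, X ω s i * β i) - v ω)
    (fun ω => lam k - (∑ i, X ω t i * β i) - v ω)
    (fun ω => ∑ i, (X ω t i - X ω s i) * β i) hΔab ham hbm hΔmX ha0 hb0
    (ε s) (ε t) (hε s) (hε t)
    (fun ω => F (X ω) (v ω)) (fun ω => hFstrict (X ω) (v ω))
    (fun r => hcdf s r) (fun r => hcdf t r)
  exact main
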